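/- For 0 < q < 1, nonnegative integers α, β and the q-beta integral: ∫_0^1 x^α (qx; q)_β d_q x = (1-q) (q;q)_α (q;q)_β / (q;q)_{α+β+1}. -/

import Mathlib

/-- The Jackson q-integral `∫_0^c f(x) d_q x = c(1-q) ∑_{k=0}^∞ f(c q^k) q^k`. -/
noncomputable def jacksonIntegral (q c : ℝ) (f : ℝ → ℝ) : ℝ :=
  c * (1 - q) * ∑' k : ℕ, f (c * q ^ k) * q ^ k

/-- The finite q-Pochhammer symbol `(a;q)_m = ∏_{k=0}^{m-1} (1 - a q^k)`. -/
noncomputable def qPoch (a q : ℝ) (m : ℕ) : ℝ :=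
  ∏ k ∈ Finset.range m, (1 - a * q ^ k)

lemma qPoch_pos (q : ℝ) (hq0 : 0 < q) (hq1 : q < 1) (k β : ℕ) :
    0 < qPoch (q ^ (k + 1)) q β := by
  apply Finset.prod_pos
  intro j _
  have h1 : q ^ (k + 1) * q ^ j = q ^ (k + 1 + j) := by ring
  rw [h1]
  have := pow_lt_one₀ hq0.le hq1 (n := k + 1 + j) (by omega)
  linarith

lemma qPoch_le_one (q : ℝ) (hq0 : 0 < q) (hq1 : q < 1) (k β : ℕ) :
    qPoch (q ^ (k + 1)) q β ≤ 1 := by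
  apply Finset.prod_le_one
  · intro j _
    have h1 : q ^ (k + 1) * q ^ j = q ^ (k + 1 + j) := by ring
    rw [h1]
    have := pow_lt_one₀ hq0.le hq1 (n := k + 1 + j) (by omega)
    linarith
  · intro j _
    have : 0 < q ^ (k + 1) * q ^ j := by positivity
    linarith

lemma qbeta_summable (q : ℝ) (hq0 : 0 < q) (hq1 : q < 1) (β α : ℕ) :
    Summable (fun k : ℕ => q ^ (k * (α + 1)) * qPoch (q ^ (k + 1)) q β) := by
  refine Summable.of_nonneg_of_le (f := fun k : ℕ => (q ^ (α + 1)) ^ k) ?_ ?_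
    (summable_geometric_of_lt_one (by positivity) (pow_lt_one₀ hq0.le hq1 α.succ_ne_zero))
  · intro k
    have := qPoch_pos q hq0 hq1 k β
    positivity
  · intro k
    have h1 : q ^ (k * (α + 1)) = (q ^ (α + 1)) ^ k := by
      rw [← pow_mul, Nat.mul_comm]
    rw [h1]
    calc (q ^ (α + 1)) ^ k * qPoch (q ^ (k + 1)) q β
        ≤ (q ^ (α + 1)) ^ k * 1 := by
          apply mul_le_mul_of_nonneg_left (qPoch_le_one q hq0 hq1 k β) (by positivity)
      _ = (q ^ (α + 1)) ^ k := by ring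

lemma qbeta_key (q : ℝ) (hq0 : 0 < q) (hq1 : q < 1) (β : ℕ) : ∀ α : ℕ,
    (∑' k : ℕ, q ^ (k * (α + 1)) * qPoch (q ^ (k + 1)) q β) =
      qPoch q q α * qPoch q q β / qPoch q q (α + β + 1) := by
  have hqpos : ∀ m : ℕ, 0 < qPoch q q m := by
    intro m
    have := qPoch_pos q hq0 hq1 0 m
    simpa [pow_one] using this
  induction β with
  | zero =>
    intro α
    have hgeo : (∑' k : ℕ, q ^ (k * (α + 1)) * qPoch (q ^ (k + 1)) q 0) =
        ∑' k : ℕ, (q ^ (α + 1)) ^ k := by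
      apply tsum_congr
      intro k
      simp [qPoch, ← pow_mul, Nat.mul_comm]
    rw [hgeo, tsum_geometric_of_lt_one (by positivity)
      (pow_lt_one₀ hq0.le hq1 (by omega))]
    have hsplit : qPoch q q (α + 0 + 1) = qPoch q q α * (1 - q ^ (α + 1)) := by
      simp [qPoch, Finset.prod_range_succ, pow_succ']
    rw [hsplit]
    have h1 : (1 : ℝ) - q ^ (α + 1) ≠ 0 := by
      have := pow_lt_one₀ hq0.le hq1 (n := α + 1) (by omega)
      intro h; nlinarith
    have h2 := (hqpos α).ne'
    rw [show qPoch q q 0 = (1:ℝ) from Finset.prod_range_zero _, mul_one]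
    rw [eq_comm, div_eq_iff (mul_ne_zero h2 h1)]
    field_simp
  | succ β ih =>
    intro α
    have hrec : ∀ k : ℕ, qPoch (q ^ (k + 1)) q (β + 1) =
        qPoch (q ^ (k + 1)) q β - q ^ (β + 1) * (q ^ k * qPoch (q ^ (k + 1)) q β) := by
      intro k
      rw [qPoch, Finset.prod_range_succ, ← qPoch]
      ring
    have hsplit : (∑' k : ℕ, q ^ (k * (α + 1)) * qPoch (q ^ (k + 1)) q (β + 1)) =
        (∑' k : ℕ, q ^ (k * (α + 1)) * qPoch (q ^ (k + 1)) q β) -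
        q ^ (β + 1) * (∑' k : ℕ, q ^ (k * (α + 1 + 1)) * qPoch (q ^ (k + 1)) q β) := by
      rw [← tsum_mul_left, ← Summable.tsum_sub (qbeta_summable q hq0 hq1 β α)
        ((qbeta_summable q hq0 hq1 β (α + 1)).mul_left _)]
      apply tsum_congr
      intro k
      rw [hrec k]
      have : q ^ (k * (α + 1 + 1)) = q ^ (k * (α + 1)) * q ^ k := by
        rw [← pow_add]; ring_nf
      rw [this]
      ring
    rw [hsplit, ih α, ih (α + 1)]
    have e1 : qPoch q q (β + 1) = qPoch q q β * (1 - q ^ (β + 1)) := by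
      simp [qPoch, Finset.prod_range_succ, pow_succ']
    have e2 : qPoch q q (α + 1) = qPoch q q α * (1 - q ^ (α + 1)) := by
      simp [qPoch, Finset.prod_range_succ, pow_succ']
    have e3 : qPoch q q (α + (β + 1) + 1) = qPoch q q (α + β + 1) * (1 - q ^ (α + β + 2)) := by
      rw [show α + (β + 1) + 1 = (α + β + 1) + 1 by ring, qPoch, Finset.prod_range_succ,
        ← qPoch, ← pow_succ']
    have e4 : qPoch q q (α + 1 + β + 1) = qPoch q q (α + β + 1) * (1 - q ^ (α + β + 2)) := by
      rw [show α + 1 + β + 1 = α + (β + 1) + 1 by ring]; exact e3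
    rw [e1, e2, e3, e4]
    have h1 : (1 : ℝ) - q ^ (α + β + 2) ≠ 0 := by
      have := pow_lt_one₀ hq0.le hq1 (n := α + β + 2) (by omega)
      intro h; nlinarith
    have h2 := (hqpos (α + β + 1)).ne'
    field_simp
    ring_nf

/-- The q-beta integral: for `0 < q < 1` and nonnegative integers `α, β`,
`∫_0^1 x^α (qx; q)_β d_q x = (1-q) (q;q)_α (q;q)_β / (q;q)_{α+β+1}`. -/
theorem jackson_qbeta (q : ℝ) (hq0 : 0 < q) (hq1 : q < 1) (α β : ℕ) :
    jacksonIntegral q 1 (fun x => x ^ α * qPoch (q * x) q β) =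
      (1 - q) * qPoch q q α * qPoch q q β / qPoch q q (α + β + 1) := by
  unfold jacksonIntegral
  have h : (∑' k : ℕ, ((1 : ℝ) * q ^ k) ^ α * qPoch (q * (1 * q ^ k)) q β * q ^ k) =
      ∑' k : ℕ, q ^ (k * (α + 1)) * qPoch (q ^ (k + 1)) q β := by
    apply tsum_congr
    intro k
    have h1 : q * (1 * q ^ k) = q ^ (k + 1) := by rw [pow_succ]; ring
    have h2 : ((1 : ℝ) * q ^ k) ^ α * q ^ k = q ^ (k * (α + 1)) := by
      rw [one_mul, ← pow_mul, ← pow_add]; ring_nf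
    rw [h1, mul_right_comm, h2]
  rw [h, qbeta_key q hq0 hq1 β α]
  ring
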